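/- Let Ω be a finite nonempty set, ρ a probability distribution on Ω, ε ≥ 0 and α ∈ [0,1]. Every ε-distorted watermarking scheme 𝒫 of ρ with Type I error α(𝒫) ≤ α has Type II error β(𝒫) ≥ min{ Σ_{x∈Ω} (ρ'(x) − α)_+ : ρ' a probability distribution on Ω with TV(ρ', ρ) ≤ ε }. -/
import Mathlib


open Finset

noncomputable section

/-- The marginal distribution of the output `X` under a joint distribution `P`
on `Ω × 2^Ω`. -/
def marginalX {Ω : Type*} [Fintype Ω] [DecidableEq Ω]
    (P : Ω × Finset Ω → ℝ) (x : Ω) : ℝ :=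
  ∑ R : Finset Ω, P (x, R)

/-- Total variation distance between two (finitely supported) distributions. -/
def tvDist {Ω : Type*} [Fintype Ω] (μ ν : Ω → ℝ) : ℝ :=
  (∑ x, |μ x - ν x|) / 2

/-- Type II error of a watermarking scheme: the probability that `X ∉ R`. -/
def typeII {Ω : Type*} [Fintype Ω] [DecidableEq Ω]
    (P : Ω × Finset Ω → ℝ) : ℝ :=
  ∑ p : Ω × Finset Ω, if p.1 ∉ p.2 then P p else 0

/-- Every `ε`-distorted watermarking scheme of `ρ` with Type I error at most `α`
has Type II error at least
`min { ∑_x (ρ'(x) − α)₊ : ρ' a probability distribution with TV(ρ', ρ) ≤ ε }`. -/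
theorem stmt_0 {Ω : Type*} [Fintype Ω] [DecidableEq Ω] [Nonempty Ω]
    (ρ : Ω → ℝ) (hρ0 : ∀ x, 0 ≤ ρ x) (hρ1 : ∑ x, ρ x = 1)
    (ε : ℝ) (hε : 0 ≤ ε) (α : ℝ) (hα : α ∈ Set.Icc (0 : ℝ) 1)
    (P : Ω × Finset Ω → ℝ) (hP0 : ∀ p, 0 ≤ P p) (hP1 : ∑ p, P p = 1)
    (hdist : tvDist (marginalX P) ρ ≤ ε)
    (htypeI : ∀ y : Ω, (∑ p : Ω × Finset Ω, if y ∈ p.2 then P p else 0) ≤ α) :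
    sInf {s : ℝ | ∃ ρ' : Ω → ℝ, (∀ x, 0 ≤ ρ' x) ∧ (∑ x, ρ' x = 1) ∧
        tvDist ρ' ρ ≤ ε ∧ s = ∑ x, max (ρ' x - α) 0}
      ≤ typeII P := by
  have hmem : (∑ x, max (marginalX P x - α) 0) ∈ {s : ℝ | ∃ ρ' : Ω → ℝ,
      (∀ x, 0 ≤ ρ' x) ∧ (∑ x, ρ' x = 1) ∧ tvDist ρ' ρ ≤ ε ∧
      s = ∑ x, max (ρ' x - α) 0} := by
    refine ⟨marginalX P, fun x => Finset.sum_nonneg fun _ _ => hP0 _, ?_, hdist, rfl⟩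
    rw [← hP1, Fintype.sum_prod_type]
    rfl
  have hbdd : BddBelow {s : ℝ | ∃ ρ' : Ω → ℝ,
      (∀ x, 0 ≤ ρ' x) ∧ (∑ x, ρ' x = 1) ∧ tvDist ρ' ρ ≤ ε ∧
      s = ∑ x, max (ρ' x - α) 0} := by
    refine ⟨0, fun s hs => ?_⟩
    obtain ⟨ρ', _, _, _, rfl⟩ := hs
    exact Finset.sum_nonneg fun x _ => le_max_right _ _
  refine le_trans (csInf_le hbdd hmem) ?_
  rw [typeII, Fintype.sum_prod_type]
  apply Finset.sum_le_sum
  intro x _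
  have h1 : (∑ R : Finset Ω, if x ∈ R then P (x, R) else 0) ≤ α := by
    refine le_trans ?_ (htypeI x)
    rw [Fintype.sum_prod_type]
    refine Finset.single_le_sum (f := fun x' => ∑ R : Finset Ω, if x ∈ R then P (x', R) else 0)
      (fun x' _ => Finset.sum_nonneg fun R _ => by split_ifs <;> simp [hP0]) (Finset.mem_univ x)
  have hsplit : marginalX P x = (∑ R : Finset Ω, if x ∈ R then P (x, R) else 0)
      + ∑ R : Finset Ω, if x ∉ R then P (x, R) else 0 := by
    rw [marginalX, ← Finset.sum_add_distrib]
    refine Finset.sum_congr rfl fun R _ => ?_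
    by_cases h : x ∈ R <;> simp [h]
  apply max_le
  · have h2 : 0 ≤ ∑ R : Finset Ω, if x ∉ R then P (x, R) else 0 :=
      Finset.sum_nonneg fun R _ => by split_ifs <;> simp [hP0]
    linarith
  · exact Finset.sum_nonneg fun R _ => by split_ifs <;> simp [hP0]
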